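/- arXiv:1905.00191 — 2 statements merged into one kernel-verified Lean document; each statement's English description precedes it below -/
import Mathlib

section
/- The function g(s) = −2e^(ε−s) + 2e^(s+ε) − e^(2ε−2s) + e^(2s) has exactly one real root, and that root lies in the open interval (0, ε/2), for every ε > 0. -/
open Real

theorem podium_g_unique_root (ε : ℝ) (hε : 0 < ε) :
    ∃ s : ℝ, (-2 * exp (ε - s) + 2 * exp (s + ε) - exp (2 * ε - 2 * s) + exp (2 * s) = 0) ∧
      0 < s ∧ s < ε / 2 ∧
      ∀ s' : ℝ,
        -2 * exp (ε - s') + 2 * exp (s' + ε) - exp (2 * ε - 2 * s') + exp (2 * s') = 0 →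
        s' = s := by
  set g : ℝ → ℝ := fun s => -2 * exp (ε - s) + 2 * exp (s + ε) - exp (2 * ε - 2 * s) + exp (2 * s)
    with hgdef
  have hmono : StrictMono g := by
    intro a b hab
    simp only [hgdef]
    have h1 : exp (ε - b) < exp (ε - a) := exp_lt_exp.2 (by linarith)
    have h2 : exp (a + ε) < exp (b + ε) := exp_lt_exp.2 (by linarith)
    have h3 : exp (2 * ε - 2 * b) < exp (2 * ε - 2 * a) := exp_lt_exp.2 (by linarith)
    have h4 : exp (2 * a) < exp (2 * b) := exp_lt_exp.2 (by linarith)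
    linarith
  have hcont : Continuous g := by fun_prop
  have hg0 : g 0 < 0 := by
    have h1 : exp 0 < exp (2 * ε) := exp_lt_exp.2 (by linarith)
    simp only [hgdef, sub_zero, add_zero, zero_add, mul_zero, exp_zero] at *
    linarith
  have hghalf : 0 < g (ε / 2) := by
    have e1 : ε - ε / 2 = ε / 2 := by ring
    have e2 : 2 * ε - 2 * (ε / 2) = ε := by ring
    have e3 : 2 * (ε / 2) = ε := by ring
    have h1 : exp (ε / 2) < exp (ε / 2 + ε) := exp_lt_exp.2 (by linarith)
    have h2 : exp (2 * ε - ε) = exp ε := by ring_nf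
    simp only [hgdef, e1, e2, e3] at *
    linarith
  have h0mem : (0 : ℝ) ∈ Set.Ioo (g 0) (g (ε / 2)) := ⟨hg0, hghalf⟩
  obtain ⟨s, hs, hgs⟩ := intermediate_value_Ioo (by linarith : (0:ℝ) ≤ ε / 2)
    hcont.continuousOn h0mem
  exact ⟨s, hgs, hs.1, hs.2, fun s' hs' => hmono.injective (hs'.trans hgs.symm)⟩
end

section
/- As ε → 0⁺, the Podium variance V(ε) = (Δ²/12)·(cosh(2ε/3 − ε) + 4cosh(ε/3) + 3)/(cosh(ε) − 1) (with s = ε/3) satisfies ε²·V(ε)/Δ² → 4/3; hence the limiting relative efficiency versus the Laplace variance 2Δ²/ε² is 2/3. -/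
open Real Filter

lemma tendsto_div_sinh : Tendsto (fun x : ℝ => x / Real.sinh x) (nhdsWithin 0 {(0:ℝ)}ᶜ) (nhds 1) := by
  have h : Tendsto (fun x : ℝ => Real.sinh x / x) (nhdsWithin 0 {(0:ℝ)}ᶜ) (nhds 1) := by
    have h0 := Real.hasDerivAt_sinh 0
    rw [hasDerivAt_iff_tendsto_slope] at h0
    refine Tendsto.congr ?_ (by simpa [Real.cosh_zero] using h0)
    intro x
    simp [slope_def_field, Real.sinh_zero]
  have := h.inv₀ one_ne_zero
  simpa [inv_div] using this

lemma tendsto_sq_div_cosh : Tendsto (fun ε : ℝ => ε ^ 2 / (Real.cosh ε - 1))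
    (nhdsWithin 0 (Set.Ioi 0)) (nhds 2) := by
  have hmap : Tendsto (fun ε : ℝ => ε / 2) (nhdsWithin 0 (Set.Ioi 0))
      (nhdsWithin 0 {(0:ℝ)}ᶜ) := by
    apply Tendsto.inf
    · have : Tendsto (fun ε : ℝ => ε / 2) (nhds 0) (nhds 0) := by
        simpa using (tendsto_id (α := ℝ) (x := nhds 0)).div_const 2
      exact this
    · refine tendsto_principal.2 (eventually_principal.2 ?_)
      intro x hx
      simp only [Set.mem_Ioi] at hx
      simp only [Set.mem_compl_iff, Set.mem_singleton_iff]
      positivity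
  have h1 : Tendsto (fun ε : ℝ => 2 * (ε / 2 / Real.sinh (ε / 2)) ^ 2)
      (nhdsWithin 0 (Set.Ioi 0)) (nhds 2) := by
    have h := ((tendsto_div_sinh.comp hmap).pow 2).const_mul 2
    rw [show (2:ℝ) * 1 ^ 2 = 2 by norm_num] at h
    exact h
  refine h1.congr' ?_
  filter_upwards [self_mem_nhdsWithin] with ε hε
  simp only [Set.mem_Ioi] at hε
  have hs : Real.sinh (ε / 2) ≠ 0 := by
    simp [Real.sinh_eq_zero]; positivity
  have hc : Real.cosh ε - 1 = 2 * Real.sinh (ε / 2) ^ 2 := by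
    have h2 : Real.cosh (2 * (ε / 2)) = 2 * Real.sinh (ε / 2) ^ 2 + 1 := by
      rw [Real.cosh_two_mul, Real.cosh_sq]; ring
    rw [show ε = 2 * (ε / 2) by ring, h2]; ring
  rw [hc]
  field_simp

theorem podium_variance_high_privacy (Δ : ℝ) (hΔ : 0 < Δ) :
    Tendsto
      (fun ε : ℝ =>
        ε ^ 2 * ((Δ ^ 2 / 12) * (cosh (2 * (ε / 3) - ε) + 4 * cosh (ε / 3) + 3) /
          (cosh ε - 1)) / Δ ^ 2)
      (nhdsWithin 0 (Set.Ioi 0)) (nhds (4 / 3)) ∧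
    Tendsto
      (fun ε : ℝ =>
        ((Δ ^ 2 / 12) * (cosh (2 * (ε / 3) - ε) + 4 * cosh (ε / 3) + 3) / (cosh ε - 1)) /
          (2 * Δ ^ 2 / ε ^ 2))
      (nhdsWithin 0 (Set.Ioi 0)) (nhds (2 / 3)) := by
  have hΔ' : (Δ : ℝ) ^ 2 ≠ 0 := by positivity
  have hN : Tendsto (fun ε : ℝ => Real.cosh (2 * (ε / 3) - ε) + 4 * Real.cosh (ε / 3) + 3)
      (nhdsWithin 0 (Set.Ioi 0)) (nhds 8) := by
    have hcont : Continuous (fun ε : ℝ => Real.cosh (2 * (ε / 3) - ε) + 4 * Real.cosh (ε / 3) + 3) := by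
      continuity
    have h := (hcont.continuousAt (x := (0:ℝ))).tendsto
    rw [show Real.cosh (2 * ((0:ℝ) / 3) - 0) + 4 * Real.cosh ((0:ℝ) / 3) + 3 = 8 by
      norm_num [Real.cosh_zero]] at h
    exact h.mono_left nhdsWithin_le_nhds
  have key : Tendsto
      (fun ε : ℝ =>
        ε ^ 2 * ((Δ ^ 2 / 12) * (Real.cosh (2 * (ε / 3) - ε) + 4 * Real.cosh (ε / 3) + 3) /
          (Real.cosh ε - 1)) / Δ ^ 2)
      (nhdsWithin 0 (Set.Ioi 0)) (nhds (4 / 3)) := by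
    have hprod : Tendsto
        (fun ε : ℝ => (1 / 12) *
          (Real.cosh (2 * (ε / 3) - ε) + 4 * Real.cosh (ε / 3) + 3) *
          (ε ^ 2 / (Real.cosh ε - 1)))
        (nhdsWithin 0 (Set.Ioi 0)) (nhds (4 / 3)) := by
      have h := (hN.const_mul (1/12 : ℝ)).mul tendsto_sq_div_cosh
      rw [show (1/12 : ℝ) * 8 * 2 = 4 / 3 by norm_num] at h
      exact h
    refine hprod.congr' ?_
    filter_upwards [self_mem_nhdsWithin] with ε hε
    simp only [Set.mem_Ioi] at hε
    have hcosh : Real.cosh ε - 1 ≠ 0 := by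
      have := Real.one_lt_cosh.2 (ne_of_gt hε)
      linarith
    field_simp
  refine ⟨key, ?_⟩
  have h2 := key.div_const 2
  rw [show (4:ℝ) / 3 / 2 = 2 / 3 by norm_num] at h2
  refine h2.congr' ?_
  filter_upwards [self_mem_nhdsWithin] with ε hε
  simp only [Set.mem_Ioi] at hε
  have hε' : ε ^ 2 ≠ 0 := by positivity
  field_simp
end
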